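/- arXiv:1311.2009 — 3 statements merged into one kernel-verified Lean document; each statement's English description precedes it below -/
import Mathlib

section
/- Fix an integer k ≥ 1 and a real number β ≠ 0. Let M be a real 4k×4k Hamiltonian matrix (with respect to Ω = [[0, I_{2k}],[−I_{2k}, 0]]) such that (M² + β²·I)^{2k} = 0 and (M² + β²·I)^{2k−1} ≠ 0 (so that over ℂ, M consists of a pair of Jordan blocks of even order 2k with eigenvalues ±iβ). Then there exists a Lagrangian subspace Γ ⊆ ℝ^{4k} (i.e. dim Γ = 2k and uᵀ·Ω·v = 0 for all u, v ∈ Γ) with M·Γ ⊆ Γ. -/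
open Matrix Module LinearMap

section Aux

variable {K : Type*} [Field K] {V : Type*} [AddCommGroup V] [Module K V] [FiniteDimensional K V]

lemma aux_finrank_range_comp (f g : V →ₗ[K] V) :
    finrank K (LinearMap.range (f ∘ₗ g)) +
      finrank K ((LinearMap.ker f ⊓ LinearMap.range g : Submodule K V)) =
      finrank K (LinearMap.range g) := by
  set p := LinearMap.range g with hp
  have h1 : LinearMap.range (f ∘ₗ p.subtype) = LinearMap.range (f ∘ₗ g) := by
    rw [range_comp, range_comp, Submodule.range_subtype]
  have h2 : LinearMap.ker (f ∘ₗ p.subtype) = Submodule.comap p.subtype (LinearMap.ker f) :=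
    ker_comp _ _
  have h3 : finrank K (Submodule.comap p.subtype (LinearMap.ker f)) =
      finrank K ((LinearMap.ker f ⊓ p : Submodule K V)) := by
    have e := Submodule.equivMapOfInjective p.subtype p.injective_subtype
      (Submodule.comap p.subtype (LinearMap.ker f))
    rw [Submodule.map_comap_subtype, inf_comm] at e
    exact e.finrank_eq
  have h4 := LinearMap.finrank_range_add_finrank_ker (f ∘ₗ p.subtype)
  rw [h1, h2, h3] at h4
  exact h4

lemma aux_even_finrank {β : ℝ} (hβ : β ≠ 0) {W : Type*} [AddCommGroup W] [Module ℝ W]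
    [FiniteDimensional ℝ W] (f : W →ₗ[ℝ] W)
    (hf : f ∘ₗ f = (-(β ^ 2)) • (LinearMap.id : W →ₗ[ℝ] W)) :
    Even (finrank ℝ W) := by
  have hdet : LinearMap.det f * LinearMap.det f = (-(β ^ 2)) ^ finrank ℝ W := by
    rw [← LinearMap.det_comp, hf, LinearMap.det_smul, LinearMap.det_id, mul_one]
  rcases Nat.even_or_odd (finrank ℝ W) with h | h
  · exact h
  · exfalso
    rw [h.neg_pow] at hdet
    have h1 : (0:ℝ) < (β ^ 2) ^ finrank ℝ W := by positivity
    nlinarith [sq_nonneg (LinearMap.det f)]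

end Aux

/-- The standard symplectic matrix `Ω = [[0, I_m],[−I_m, 0]]` on `ℝ^{2m}`. -/
noncomputable def Omega (m : ℕ) : Matrix (Fin m ⊕ Fin m) (Fin m ⊕ Fin m) ℝ :=
  Matrix.fromBlocks 0 1 (-1) 0

theorem exists_invariant_lagrangian_of_even_jordan_pair {k : ℕ} (hk : 1 ≤ k)
    (β : ℝ) (hβ : β ≠ 0)
    (M : Matrix (Fin (2 * k) ⊕ Fin (2 * k)) (Fin (2 * k) ⊕ Fin (2 * k)) ℝ)
    (hham : (Omega (2 * k) * M)ᵀ = Omega (2 * k) * M)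
    (hnilp : (M ^ 2 + (β ^ 2) • (1 : Matrix (Fin (2 * k) ⊕ Fin (2 * k))
        (Fin (2 * k) ⊕ Fin (2 * k)) ℝ)) ^ (2 * k) = 0)
    (hnontriv : (M ^ 2 + (β ^ 2) • (1 : Matrix (Fin (2 * k) ⊕ Fin (2 * k))
        (Fin (2 * k) ⊕ Fin (2 * k)) ℝ)) ^ (2 * k - 1) ≠ 0) :
    ∃ Γ : Submodule ℝ (Fin (2 * k) ⊕ Fin (2 * k) → ℝ),
      Module.finrank ℝ Γ = 2 * k ∧
      (∀ u ∈ Γ, ∀ v ∈ Γ, u ⬝ᵥ (Omega (2 * k)).mulVec v = 0) ∧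
      (∀ u ∈ Γ, M.mulVec u ∈ Γ) := by
  set Ω := Omega (2 * k) with hΩdef
  set N : Matrix (Fin (2 * k) ⊕ Fin (2 * k)) (Fin (2 * k) ⊕ Fin (2 * k)) ℝ :=
    M ^ 2 + (β ^ 2) • 1 with hNdef
  -- basic algebraic facts
  have hΩT : Ωᵀ = -Ω := by
    rw [hΩdef, Omega, fromBlocks_transpose, Matrix.fromBlocks_neg]
    simp
  have hΩΩ : Ω * Ω = -1 := by
    rw [hΩdef, Omega, fromBlocks_multiply, ← Matrix.fromBlocks_one, Matrix.fromBlocks_neg]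
    simp
  have hMT : Mᵀ * Ω = -(Ω * M) := by
    have h := hham
    rw [Matrix.transpose_mul, hΩT, Matrix.mul_neg] at h
    rw [← h, neg_neg]
  have hNT : Nᵀ = Mᵀ ^ 2 + (β ^ 2) • 1 := by
    rw [hNdef]
    simp [pow_two, Matrix.transpose_add, Matrix.transpose_smul, Matrix.transpose_mul]
  have hΩN : Ω * N = Nᵀ * Ω := by
    rw [hNT, hNdef]
    rw [Matrix.mul_add, Matrix.add_mul, Matrix.mul_smul, Matrix.smul_mul, Matrix.mul_one,
      Matrix.one_mul]
    congr 1
    rw [pow_two, pow_two, ← Matrix.mul_assoc, Matrix.mul_assoc Mᵀ Mᵀ Ω, hMT, Matrix.mul_neg,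
      Matrix.mul_assoc, ← Matrix.mul_assoc Mᵀ Ω M, hMT, Matrix.neg_mul, neg_neg,
      Matrix.mul_assoc]
  have hΩNj : ∀ j : ℕ, Ω * N ^ j = (N ^ j)ᵀ * Ω := by
    intro j
    induction j with
    | zero => simp
    | succ j ih =>
      calc Ω * N ^ (j + 1) = (Ω * N ^ j) * N := by rw [pow_succ, Matrix.mul_assoc]
        _ = (N ^ j)ᵀ * (Ω * N) := by rw [ih, Matrix.mul_assoc]
        _ = ((N * N ^ j)ᵀ) * Ω := by
            rw [hΩN, Matrix.transpose_mul, Matrix.mul_assoc]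
        _ = (N ^ (j + 1))ᵀ * Ω := by rw [← pow_succ']
  have hcomm : ∀ j : ℕ, M * N ^ j = N ^ j * M := by
    intro j
    have : Commute M N := by
      apply Commute.add_right
      · exact (Commute.refl M).pow_right 2
      · exact (Commute.one_right M).smul_right _
    exact (this.pow_right j).eq
  have hcomm1 : N * M = M * N := by
    have := hcomm 1
    rw [pow_one] at this
    exact this.symm
  have hIso : (N ^ k)ᵀ * (Ω * N ^ k) = 0 := by
    rw [hΩNj k, ← Matrix.mul_assoc, ← Matrix.transpose_mul, ← pow_add]
    have h2 : k + k = 2 * k := by ring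
    rw [h2, hnilp, Matrix.transpose_zero, Matrix.zero_mul]
  -- ranks
  set r : ℕ → ℕ := fun j => finrank ℝ (LinearMap.range (N ^ j).mulVecLin) with hrdef
  set e : ℕ → ℕ := fun j =>
    finrank ℝ ((LinearMap.ker N.mulVecLin ⊓ LinearMap.range (N ^ j).mulVecLin :
      Submodule ℝ (Fin (2 * k) ⊕ Fin (2 * k) → ℝ))) with hedef
  have hcompLin : ∀ j : ℕ, (N ^ (j + 1)).mulVecLin = N.mulVecLin ∘ₗ (N ^ j).mulVecLin := by
    intro j
    rw [← Matrix.mulVecLin_mul, ← pow_succ']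
  have hA : ∀ j : ℕ, r (j + 1) + e j = r j := by
    intro j
    have := aux_finrank_range_comp N.mulVecLin (N ^ j).mulVecLin
    rw [← hcompLin j] at this
    exact this
  have hrange_mono : ∀ i j : ℕ, i ≤ j →
      LinearMap.range (N ^ j).mulVecLin ≤ LinearMap.range (N ^ i).mulVecLin := by
    intro i j hij
    have h : N ^ j = N ^ i * N ^ (j - i) := by
      rw [← pow_add, Nat.add_sub_cancel' hij]
    rw [h, Matrix.mulVecLin_mul]
    exact LinearMap.range_comp_le_range _ _
  have he_mono : ∀ i j : ℕ, i ≤ j → e j ≤ e i := by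
    intro i j hij
    exact Submodule.finrank_mono (inf_le_inf_left _ (hrange_mono i j hij))
  -- parity of e j
  have he_even : ∀ j : ℕ, Even (e j) := by
    intro j
    set W : Submodule ℝ (Fin (2 * k) ⊕ Fin (2 * k) → ℝ) :=
      LinearMap.ker N.mulVecLin ⊓ LinearMap.range (N ^ j).mulVecLin with hWdef
    have hWM : ∀ x ∈ W, M.mulVecLin x ∈ W := by
      intro x hx
      rw [hWdef, Submodule.mem_inf] at hx ⊢
      obtain ⟨hx1, hx2⟩ := hx
      have hx1' : N *ᵥ x = 0 := hx1
      constructor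
      · show N.mulVecLin (M.mulVecLin x) = 0
        simp only [Matrix.mulVecLin_apply]
        rw [Matrix.mulVec_mulVec, hcomm1, ← Matrix.mulVec_mulVec, hx1', Matrix.mulVec_zero]
      · obtain ⟨a, ha⟩ := hx2
        refine ⟨M *ᵥ a, ?_⟩
        show (N ^ j) *ᵥ (M *ᵥ a) = M.mulVecLin x
        have ha' : (N ^ j) *ᵥ a = x := ha
        simp only [Matrix.mulVecLin_apply]
        rw [Matrix.mulVec_mulVec, ← hcomm j, ← Matrix.mulVec_mulVec, ha']
    let φ : W →ₗ[ℝ] W := (M.mulVecLin).restrict hWM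
    have hφ : φ ∘ₗ φ = (-(β ^ 2)) • (LinearMap.id : W →ₗ[ℝ] W) := by
      refine LinearMap.ext fun x => Subtype.ext ?_
      have hx1 : N *ᵥ (x : Fin (2 * k) ⊕ Fin (2 * k) → ℝ) = 0 :=
        (Submodule.mem_inf.mp x.2).1
      have hM2 : (M ^ 2) *ᵥ (x : Fin (2 * k) ⊕ Fin (2 * k) → ℝ)
          = -(β ^ 2) • (x : Fin (2 * k) ⊕ Fin (2 * k) → ℝ) := by
        rw [hNdef, Matrix.add_mulVec, Matrix.smul_mulVec, Matrix.one_mulVec] at hx1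
        rw [neg_smul]
        exact eq_neg_of_add_eq_zero_left hx1
      simp only [LinearMap.comp_apply, LinearMap.smul_apply, LinearMap.id_apply,
        SetLike.val_smul, φ, LinearMap.restrict_coe_apply, Matrix.mulVecLin_apply]
      rw [Matrix.mulVec_mulVec, ← pow_two, hM2]
    exact aux_even_finrank hβ φ hφ
  -- r (2k) = 0
  have hr2k : r (2 * k) = 0 := by
    show finrank ℝ (LinearMap.range (N ^ (2 * k)).mulVecLin) = 0
    rw [hnilp, Matrix.mulVecLin_zero, LinearMap.range_zero, finrank_bot]
  have hr2k1 : 1 ≤ r (2 * k - 1) := by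
    rw [Nat.one_le_iff_ne_zero]
    intro h0
    apply hnontriv
    have hbot : LinearMap.range (N ^ (2 * k - 1)).mulVecLin = ⊥ :=
      Submodule.finrank_eq_zero.mp h0
    ext i j
    have h1 : (N ^ (2 * k - 1)) *ᵥ (Pi.single j 1) = 0 := by
      have h2 : (N ^ (2 * k - 1)).mulVecLin (Pi.single j 1) ∈
          LinearMap.range (N ^ (2 * k - 1)).mulVecLin := LinearMap.mem_range_self _ _
      rw [hbot] at h2
      simpa [Matrix.mulVecLin_apply] using h2
    have h3 := congrFun h1 i
    simpa [Matrix.mulVec_single] using h3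
  have he2k1 : 1 ≤ e (2 * k - 1) := by
    have h := hA (2 * k - 1)
    have h1 : 2 * k - 1 + 1 = 2 * k := by omega
    rw [h1, hr2k] at h
    omega
  have he_ge2 : ∀ j : ℕ, j ≤ 2 * k - 1 → 2 ≤ e j := by
    intro j hj
    have h1 := he_mono j (2 * k - 1) hj
    obtain ⟨c, hc⟩ := he_even j
    omega
  -- lower bound
  have hlow : ∀ t : ℕ, t ≤ k → 2 * t ≤ r (2 * k - t) := by
    intro t
    induction t with
    | zero => intro _; omega
    | succ t ih =>
      intro ht
      have h1 := ih (by omega)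
      have h2 := hA (2 * k - t - 1)
      have h3 : 2 * k - t - 1 + 1 = 2 * k - t := by omega
      rw [h3] at h2
      have h4 : 2 ≤ e (2 * k - t - 1) := he_ge2 _ (by omega)
      have h5 : 2 * k - (t + 1) = 2 * k - t - 1 := by omega
      rw [h5]
      omega
  have hrk_lower : 2 * k ≤ r k := by
    have h := hlow k le_rfl
    have h1 : 2 * k - k = k := by omega
    rw [h1] at h
    exact h
  -- upper bound
  have hcard : finrank ℝ (Fin (2 * k) ⊕ Fin (2 * k) → ℝ) = 2 * k + 2 * k := by
    simp
  have hrk_upper : r k ≤ 2 * k := by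
    set P : Matrix (Fin (2 * k) ⊕ Fin (2 * k)) (Fin (2 * k) ⊕ Fin (2 * k)) ℝ :=
      (N ^ k)ᵀ * Ω with hPdef
    have hPN : P * N ^ k = 0 := by
      rw [hPdef, Matrix.mul_assoc, hIso]
    have hsub : LinearMap.range (N ^ k).mulVecLin ≤ LinearMap.ker P.mulVecLin := by
      rintro x ⟨a, rfl⟩
      show P.mulVecLin ((N ^ k).mulVecLin a) = 0
      simp only [Matrix.mulVecLin_apply]
      rw [Matrix.mulVec_mulVec, hPN, Matrix.zero_mulVec]
    have h1 : r k ≤ finrank ℝ (LinearMap.ker P.mulVecLin) := Submodule.finrank_mono hsub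
    have h2 := LinearMap.finrank_range_add_finrank_ker P.mulVecLin
    rw [hcard] at h2
    have h3 : (N ^ k)ᵀ = P * (-Ω) := by
      rw [hPdef, Matrix.mul_assoc, Matrix.mul_neg, hΩΩ, neg_neg, Matrix.mul_one]
    have h4 : ((N ^ k)ᵀ).rank ≤ P.rank := by
      rw [h3]
      exact Matrix.rank_mul_le_left _ _
    rw [Matrix.rank_transpose] at h4
    have h5 : (N ^ k).rank = r k := rfl
    have h6 : P.rank = finrank ℝ (LinearMap.range P.mulVecLin) := rfl
    omega
  have hrk : r k = 2 * k := le_antisymm hrk_upper hrk_lower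
  -- conclusion
  refine ⟨LinearMap.range (N ^ k).mulVecLin, hrk, ?_, ?_⟩
  · rintro u ⟨a, rfl⟩ v ⟨b, rfl⟩
    simp only [Matrix.mulVecLin_apply]
    rw [Matrix.mulVec_mulVec, Matrix.dotProduct_mulVec]
    have hu : (N ^ k) *ᵥ a = a ᵥ* (N ^ k)ᵀ := by
      rw [Matrix.vecMul_transpose]
    rw [hu, Matrix.vecMul_vecMul, ← Matrix.mul_assoc, Matrix.mul_assoc ((N ^ k)ᵀ) Ω (N ^ k),
      hIso, Matrix.vecMul_zero, zero_dotProduct]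
  · rintro u ⟨a, rfl⟩
    refine ⟨M *ᵥ a, ?_⟩
    show (N ^ k) *ᵥ (M *ᵥ a) = M *ᵥ ((N ^ k).mulVecLin a)
    simp only [Matrix.mulVecLin_apply]
    rw [Matrix.mulVec_mulVec, ← hcomm k, ← Matrix.mulVec_mulVec]
end

section
/- Fix an integer k ≥ 1 and a real number β ≠ 0. Let M be a real (4k+2)×(4k+2) Hamiltonian matrix (with respect to Ω = [[0, I_{2k+1}],[−I_{2k+1}, 0]]) such that (M² + β²·I)^{2k+1} = 0 and (M² + β²·I)^{2k} ≠ 0 (so that over ℂ, M consists of a pair of Jordan blocks of odd order 2k+1 with eigenvalues ±iβ). Then there exists a subspace Γ ⊆ ℝ^{4k+2} with dim Γ = 2k, uᵀ·Ω·v = 0 for all u, v ∈ Γ (Γ is isotropic), and M·Γ ⊆ Γ. -/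
open Matrix

private lemma fromBlocks_neg' {n m : Type} [Fintype n] [Fintype m]
    (A : Matrix n n ℝ) (B : Matrix n m ℝ) (C : Matrix m n ℝ) (D : Matrix m m ℝ) :
    -(Matrix.fromBlocks A B C D) = Matrix.fromBlocks (-A) (-B) (-C) (-D) := by
  ext (i | i) (j | j) <;> simp

/-- A finite-dimensional real vector space carrying a nondegenerate alternating bilinear
form has even dimension. -/
private lemma even_finrank_of_alt_nondeg :
    ∀ (n : ℕ) (V : Type) [AddCommGroup V] [Module ℝ V] [FiniteDimensional ℝ V]
      (B : LinearMap.BilinForm ℝ V), Module.finrank ℝ V = n →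
      B.IsAlt → B.Nondegenerate → Even n := by
  intro n
  induction n using Nat.strong_induction_on with
  | _ n IH =>
    intro V _ _ _ B hdim halt hnd
    rcases Nat.eq_zero_or_pos n with h0 | hpos
    · simp [h0]
    have : Nontrivial V := Module.nontrivial_of_finrank_pos (R := ℝ) (by omega : 0 < Module.finrank ℝ V)
    obtain ⟨x, hx⟩ := exists_ne (0 : V)
    have hy : ∃ y, B x y ≠ 0 := by
      by_contra h; push_neg at h; exact hx (hnd.1 x h)
    obtain ⟨y, hxy⟩ := hy
    have hli : LinearIndependent ℝ ![x, y] := by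
      rw [LinearIndependent.pair_iff]
      intro s t hst
      have h1 : B x (s • x + t • y) = 0 := by rw [hst]; simp
      rw [map_add, _root_.map_smul, _root_.map_smul, halt x] at h1
      simp only [smul_eq_mul, mul_zero, zero_add] at h1
      have ht : t = 0 := by
        rcases mul_eq_zero.mp h1 with h | h
        · exact h
        · exact absurd h hxy
      subst ht
      simp only [zero_smul, add_zero, smul_eq_zero] at hst
      rcases hst with h | h
      · exact ⟨h, rfl⟩
      · exact absurd h hx
    set W : Submodule ℝ V := Submodule.span ℝ (Set.range ![x, y]) with hW
    have hrange : Set.range ![x, y] = {x, y} := by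
      ext z
      simp [Fin.exists_fin_two, or_comm]
    have hfW : Module.finrank ℝ W = 2 := by
      rw [hW, finrank_span_eq_card hli]
      simp
    have hxW : x ∈ W := Submodule.subset_span (by rw [hrange]; left; rfl)
    have hyW : y ∈ W := Submodule.subset_span (by rw [hrange]; right; rfl)
    have hres : (B.restrict W).Nondegenerate := by
      refine (LinearMap.IsRefl.nondegenerate_iff_separatingLeft (show (B.restrict W).IsAlt from fun w => halt w).isRefl).mpr ?_
      rintro ⟨w, hw⟩ h
      have hwx : B w x = 0 := h ⟨x, hxW⟩
      have hwy : B w y = 0 := h ⟨y, hyW⟩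
      rw [hW, hrange, Submodule.mem_span_pair] at hw
      obtain ⟨a, b, hab⟩ := hw
      have h1 : B w y = a * B x y := by
        rw [← hab]; simp [halt y]
      have h2 : B w x = -(b * B x y) := by
        rw [← hab]
        simp only [map_add, LinearMap.add_apply, LinearMap.smul_apply, _root_.map_smul, halt x,
          smul_eq_mul, mul_zero, zero_add]
        rw [← _root_.LinearMap.IsAlt.neg halt x y]
        ring
      have ha : a = 0 := by
        rw [hwy] at h1
        rcases mul_eq_zero.mp h1.symm with h | h
        · exact h
        · exact absurd h hxy
      have hb : b = 0 := by
        rw [hwx, eq_comm, neg_eq_zero] at h2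
        rcases mul_eq_zero.mp h2 with h | h
        · exact h
        · exact absurd h hxy
      apply Subtype.ext
      simp only [Submodule.coe_zero]
      rw [← hab, ha, hb]; simp
    have hcompl : IsCompl W (B.orthogonal W) :=
      LinearMap.BilinForm.isCompl_orthogonal_of_restrict_nondegenerate halt.isRefl hres
    have hsum : Module.finrank ℝ W + Module.finrank ℝ (B.orthogonal W) = n := by
      rw [Submodule.finrank_add_eq_of_isCompl hcompl, hdim]
    set W' := B.orthogonal W with hW'
    have hdisj : Disjoint W' (B.orthogonal W') := by
      rw [hW', LinearMap.BilinForm.orthogonal_orthogonal hnd halt.isRefl]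
      exact hcompl.disjoint.symm
    have hres2 : (B.restrict W').Nondegenerate :=
      B.nondegenerate_restrict_of_disjoint_orthogonal halt.isRefl hdisj
    have halt2 : (B.restrict W').IsAlt := fun w => halt w
    have hlt : Module.finrank ℝ W' < n := by omega
    have := IH (Module.finrank ℝ W') hlt W' (B.restrict W') rfl halt2 hres2
    obtain ⟨c, hc⟩ := this
    exact ⟨c + 1, by omega⟩

/-- A real skew-symmetric matrix has even rank. -/
private lemma even_rank_of_skew {ι : Type} [Fintype ι] [DecidableEq ι]
    (A : Matrix ι ι ℝ) (hA : Aᵀ = -A) : Even A.rank := by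
  classical
  set B : LinearMap.BilinForm ℝ (ι → ℝ) := LinearMap.mk₂ ℝ (fun u v => u ⬝ᵥ A.mulVec v)
    (fun u u' v => by simp [add_dotProduct])
    (fun c u v => by simp [smul_dotProduct])
    (fun u v v' => by simp [mulVec_add, dotProduct_add])
    (fun c u v => by simp [mulVec_smul, dotProduct_smul]) with hB
  have hBapp : ∀ u v, B u v = u ⬝ᵥ A.mulVec v := fun u v => rfl
  have hswap : ∀ u v, B u v = -B v u := by
    intro u v
    rw [hBapp, hBapp, dotProduct_mulVec]
    have : u ᵥ* A = -(A *ᵥ u) := by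
      calc u ᵥ* A = u ᵥ* (Aᵀ)ᵀ := by rw [transpose_transpose]
        _ = Aᵀ *ᵥ u := vecMul_transpose _ _
        _ = (-A) *ᵥ u := by rw [hA]
        _ = -(A *ᵥ u) := neg_mulVec _ _
    rw [this]
    rw [neg_dotProduct, dotProduct_comm]
  have halt : B.IsAlt := by
    intro u
    have := hswap u u
    linarith
  set K := LinearMap.ker A.mulVecLin with hK
  obtain ⟨C, hC⟩ := Submodule.exists_isCompl K
  have hdisj : Disjoint C (B.orthogonal C) := by
    rw [Submodule.disjoint_def]
    intro z hzC hzO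
    have hrad : ∀ v, B z v = 0 := by
      intro v
      obtain ⟨a, b, haK, hbC, hab⟩ := Submodule.codisjoint_iff_exists_add_eq.mp hC.codisjoint v
      have ha0 : A.mulVec a = 0 := haK
      have h1 : B z a = 0 := by rw [hBapp, ha0]; simp
      have h2 : B z b = 0 := by
        rw [hswap]
        have := hzO b hbC
        rw [this, neg_zero]
      rw [← hab, map_add, h1, h2, add_zero]
    have hzK : z ∈ K := by
      have h0 : B (A.mulVec z) z = 0 := by
        rw [hswap, hrad, neg_zero]
      rw [hBapp] at h0
      exact dotProduct_self_eq_zero.mp h0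
    have := hC.disjoint
    rw [Submodule.disjoint_def] at this
    exact this z hzK hzC
  have hres : (B.restrict C).Nondegenerate :=
    B.nondegenerate_restrict_of_disjoint_orthogonal halt.isRefl hdisj
  have halt2 : (B.restrict C).IsAlt := fun w => halt w
  have heven : Even (Module.finrank ℝ C) :=
    even_finrank_of_alt_nondeg (Module.finrank ℝ C) C (B.restrict C) rfl halt2 hres
  have h1 : Module.finrank ℝ K + Module.finrank ℝ C = Module.finrank ℝ (ι → ℝ) :=
    Submodule.finrank_add_eq_of_isCompl hC
  have h2 : Module.finrank ℝ (LinearMap.range A.mulVecLin) + Module.finrank ℝ K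
      = Module.finrank ℝ (ι → ℝ) := LinearMap.finrank_range_add_finrank_ker A.mulVecLin
  have h3 : A.rank = Module.finrank ℝ C := by
    rw [Matrix.rank]; omega
  rw [h3]; exact heven

theorem exists_invariant_isotropic_of_odd_jordan_pair {k : ℕ} (hk : 1 ≤ k)
    (β : ℝ) (hβ : β ≠ 0)
    (M : Matrix (Fin (2 * k + 1) ⊕ Fin (2 * k + 1)) (Fin (2 * k + 1) ⊕ Fin (2 * k + 1)) ℝ)
    (hham : (Omega (2 * k + 1) * M)ᵀ = Omega (2 * k + 1) * M)
    (hnilp : (M ^ 2 + (β ^ 2) • (1 : Matrix (Fin (2 * k + 1) ⊕ Fin (2 * k + 1))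
        (Fin (2 * k + 1) ⊕ Fin (2 * k + 1)) ℝ)) ^ (2 * k + 1) = 0)
    (hnontriv : (M ^ 2 + (β ^ 2) • (1 : Matrix (Fin (2 * k + 1) ⊕ Fin (2 * k + 1))
        (Fin (2 * k + 1) ⊕ Fin (2 * k + 1)) ℝ)) ^ (2 * k) ≠ 0) :
    ∃ Γ : Submodule ℝ (Fin (2 * k + 1) ⊕ Fin (2 * k + 1) → ℝ),
      Module.finrank ℝ Γ = 2 * k ∧
      (∀ u ∈ Γ, ∀ v ∈ Γ, u ⬝ᵥ (Omega (2 * k + 1)).mulVec v = 0) ∧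
      (∀ u ∈ Γ, M.mulVec u ∈ Γ) := by
  classical
  set Ω := Omega (2 * k + 1) with hΩdef
  set N := M ^ 2 + (β ^ 2) • (1 : Matrix (Fin (2 * k + 1) ⊕ Fin (2 * k + 1))
      (Fin (2 * k + 1) ⊕ Fin (2 * k + 1)) ℝ) with hNdef
  -- basic facts about Ω
  have hΩT : Ωᵀ = -Ω := by
    rw [hΩdef, Omega, Matrix.fromBlocks_transpose, fromBlocks_neg']
    simp
  have hΩΩ : Ω * (-Ω) = 1 := by
    rw [hΩdef, Omega, fromBlocks_neg']
    rw [Matrix.fromBlocks_multiply]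
    rw [← Matrix.fromBlocks_one]
    congr 1 <;> simp
  have hΩdet : IsUnit Ω.det := Matrix.isUnit_det_of_right_inverse hΩΩ
  -- Hamiltonian identities
  have hMT : Mᵀ * Ω = -(Ω * M) := by
    have := hham
    rw [Matrix.transpose_mul, hΩT] at this
    rw [Matrix.mul_neg] at this
    linear_combination (norm := noncomm_ring) -this
  have hNT : Nᵀ * Ω = Ω * N := by
    have h2 : Mᵀ * (Mᵀ * Ω) = Ω * (M * M) := by
      rw [hMT, Matrix.mul_neg, ← Matrix.mul_assoc, hMT]
      noncomm_ring
    rw [hNdef]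
    rw [Matrix.transpose_add, Matrix.transpose_smul, Matrix.transpose_one, Matrix.transpose_pow]
    rw [Matrix.add_mul, Matrix.smul_mul, Matrix.one_mul]
    rw [Matrix.mul_add, Matrix.mul_smul, Matrix.mul_one]
    rw [pow_two, Matrix.mul_assoc, h2, ← pow_two]
  have hNTj : ∀ j : ℕ, (Nᵀ) ^ j * Ω = Ω * N ^ j := by
    intro j
    induction j with
    | zero => simp
    | succ j ih =>
      rw [pow_succ, pow_succ, Matrix.mul_assoc, hNT, ← Matrix.mul_assoc, ih, Matrix.mul_assoc]
  have hskew : ∀ j : ℕ, (Ω * N ^ j)ᵀ = -(Ω * N ^ j) := by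
    intro j
    rw [Matrix.transpose_mul, hΩT, Matrix.mul_neg, Matrix.transpose_pow, hNTj]
  have hrank_even : ∀ j : ℕ, Even ((N ^ j).rank) := by
    intro j
    have h1 : Even ((Ω * N ^ j).rank) := even_rank_of_skew _ (hskew j)
    rwa [Matrix.rank_mul_eq_right_of_isUnit_det Ω (N ^ j) hΩdet] at h1
  -- pass to linear maps
  set g : Module.End ℝ (Fin (2 * k + 1) ⊕ Fin (2 * k + 1) → ℝ) := N.mulVecLin with hg
  have hgp : ∀ j : ℕ, (N ^ j).mulVecLin = g ^ j := by
    intro j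
    induction j with
    | zero => simp [Matrix.mulVecLin_one, Module.End.one_eq_id]
    | succ j ih =>
      rw [pow_succ, Matrix.mulVecLin_mul, ih, pow_succ]
      rfl
  have hdimV : Module.finrank ℝ (Fin (2 * k + 1) ⊕ Fin (2 * k + 1) → ℝ) = 4 * k + 2 := by
    simp [Module.finrank_pi]
    omega
  set d : ℕ → ℕ := fun j => Module.finrank ℝ (LinearMap.ker (g ^ j)) with hd
  have hrn : ∀ j : ℕ, (N ^ j).rank + d j = 4 * k + 2 := by
    intro j
    have := LinearMap.finrank_range_add_finrank_ker (g ^ j)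
    rw [hdimV] at this
    rw [Matrix.rank, hgp j]
    exact this
  have hdeven : ∀ j : ℕ, Even (d j) := by
    intro j
    have h1 := hrank_even j
    have h2 := hrn j
    rw [Nat.even_iff] at h1 ⊢
    omega
  have hker_le : ∀ j : ℕ, LinearMap.ker (g ^ j) ≤ LinearMap.ker (g ^ (j + 1)) := by
    intro j x hx
    rw [LinearMap.mem_ker] at hx ⊢
    rw [pow_succ']
    simp [Module.End.mul_apply, hx]
  have hgtop : LinearMap.ker (g ^ (2 * k + 1)) = ⊤ := by
    rw [← hgp, hnilp]
    simp [Matrix.mulVecLin_zero]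
  have hlt : ∀ j : ℕ, j ≤ 2 * k → d j < d (j + 1) := by
    intro j hj
    by_contra hcon
    push_neg at hcon
    have heq : LinearMap.ker (g ^ j) = LinearMap.ker (g ^ (j + 1)) :=
      Submodule.eq_of_le_of_finrank_le (hker_le j) hcon
    have hconst := Module.End.ker_pow_constant heq
    have h2k : LinearMap.ker (g ^ (2 * k)) = LinearMap.ker (g ^ j) := by
      have := hconst (2 * k - j)
      rw [show j + (2 * k - j) = 2 * k by omega] at this
      exact this.symm
    have h2k1 : LinearMap.ker (g ^ (2 * k + 1)) = LinearMap.ker (g ^ j) := by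
      have := hconst (2 * k + 1 - j)
      rw [show j + (2 * k + 1 - j) = 2 * k + 1 by omega] at this
      exact this.symm
    have htop : LinearMap.ker (g ^ (2 * k)) = ⊤ := by
      rw [h2k, ← h2k1, hgtop]
    have hzero : g ^ (2 * k) = 0 := LinearMap.ker_eq_top.mp htop
    apply hnontriv
    have hmv : (N ^ (2 * k)).mulVecLin = 0 := by rw [hgp]; exact hzero
    ext i j'
    have := congrFun (congrArg (fun f => f (Pi.single j' 1)) (congrArg DFunLike.coe hmv)) i
    simpa [Matrix.mulVecLin_apply, Matrix.mulVec_single] using this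
  have hstep : ∀ j : ℕ, j ≤ 2 * k → d j + 2 ≤ d (j + 1) := by
    intro j hj
    have h1 := hlt j hj
    have h2 := hdeven j
    have h3 := hdeven (j + 1)
    rw [Nat.even_iff] at h2 h3
    omega
  have hd0 : d 0 = 0 := by
    show Module.finrank ℝ (LinearMap.ker (g ^ 0)) = 0
    rw [pow_zero]
    simp [Module.End.one_eq_id]
    exact finrank_bot _ _
  have hdtop : d (2 * k + 1) = 4 * k + 2 := by
    show Module.finrank ℝ (LinearMap.ker (g ^ (2 * k + 1))) = 4 * k + 2
    rw [hgtop, finrank_top, hdimV]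
  have hub : ∀ j : ℕ, j ≤ 2 * k + 1 → 2 * j ≤ d j := by
    intro j
    induction j with
    | zero => intro _; omega
    | succ j ih =>
      intro hj
      have h1 := ih (by omega)
      have h2 := hstep j (by omega)
      omega
  have hlb : ∀ m : ℕ, m ≤ 2 * k + 1 → d (2 * k + 1 - m) + 2 * m ≤ 4 * k + 2 := by
    intro m
    induction m with
    | zero => intro _; simp [hdtop]
    | succ m ih =>
      intro hm
      have h1 := ih (by omega)
      have h2 := hstep (2 * k + 1 - (m + 1)) (by omega)
      rw [show 2 * k + 1 - (m + 1) + 1 = 2 * k + 1 - m by omega] at h2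
      omega
  have hdk1 : d (k + 1) = 2 * k + 2 := by
    have h1 := hub (k + 1) (by omega)
    have h2 := hlb k (by omega)
    rw [show 2 * k + 1 - k = k + 1 by omega] at h2
    omega
  -- the invariant isotropic subspace
  refine ⟨LinearMap.range (g ^ (k + 1)), ?_, ?_, ?_⟩
  · have h1 := hrn (k + 1)
    have h2 : (N ^ (k + 1)).rank = Module.finrank ℝ (LinearMap.range (g ^ (k + 1))) := by
      rw [Matrix.rank, hgp]
    omega
  · rintro u hu v hv
    obtain ⟨x, hx⟩ := hu
    obtain ⟨y, hy⟩ := hv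
    have hxu : u = (N ^ (k + 1)).mulVec x := by rw [← hx, ← hgp]; rfl
    have hyv : v = (N ^ (k + 1)).mulVec y := by rw [← hy, ← hgp]; rfl
    have hzero : (N ^ (k + 1))ᵀ * (Ω * N ^ (k + 1)) = 0 := by
      rw [← Matrix.mul_assoc, Matrix.transpose_pow, hNTj, Matrix.mul_assoc, ← pow_add]
      have : N ^ (k + 1 + (k + 1)) = 0 := by
        rw [show k + 1 + (k + 1) = (2 * k + 1) + 1 by omega, pow_succ, hnilp, Matrix.zero_mul]
      rw [this, Matrix.mul_zero]
    rw [hxu, hyv, Matrix.mulVec_mulVec, Matrix.dotProduct_mulVec]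
    have hmvx : N ^ (k + 1) *ᵥ x = x ᵥ* (N ^ (k + 1))ᵀ := (Matrix.vecMul_transpose _ _).symm
    rw [hmvx, Matrix.vecMul_vecMul, hzero]
    simp
  · rintro u hu
    obtain ⟨x, hx⟩ := hu
    have hcomm : Commute M N := by
      rw [hNdef]
      exact Commute.add_right ((Commute.refl M).pow_right 2)
        (Commute.smul_right (Commute.one_right M) (β ^ 2))
    have hcommp : M * N ^ (k + 1) = N ^ (k + 1) * M := (hcomm.pow_right (k + 1)).eq
    have hxu : u = (N ^ (k + 1)).mulVec x := by rw [← hx, ← hgp]; rfl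
    refine ⟨M.mulVec x, ?_⟩
    rw [← hgp]
    show (N ^ (k + 1)).mulVec (M.mulVec x) = M.mulVec u
    rw [hxu, Matrix.mulVec_mulVec, Matrix.mulVec_mulVec, hcommp]
end

section
/- Let S : ℝ → M_n(ℝ) be a real-analytic family of symmetric n×n real matrices with S(0) = 0, such that S'(t) is positive semidefinite for all t in a neighborhood of 0, and such that S is ample at 0, i.e. there exists an integer N ≥ 1 such that for every z ∈ ℝⁿ, z ≠ 0, there is some i with 1 ≤ i ≤ N and S^{(i)}(0)·z ≠ 0. Let J ⊆ {1,…,n} be any index set and let S_J(t) denote the principal submatrix of S(t) with rows and columns in J. Then S_J is ample at 0: there exists an integer N' ≥ 1 such that for every y ∈ ℝ^J, y ≠ 0, there is some i with 1 ≤ i ≤ N' and S_J^{(i)}(0)·y ≠ 0 (moreover S_J'(t) is positive semidefinite, so the reduced curve is monotone and ample). -/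
open Matrix

/-- The `i`-th derivative of a matrix-valued curve, computed entrywise. -/
noncomputable def matDeriv {m : Type*} (S : ℝ → Matrix m m ℝ) (i : ℕ) (t : ℝ) :
    Matrix m m ℝ :=
  Matrix.of fun a b => iteratedDeriv i (fun s => S s a b) t

/-- The principal submatrix of a matrix curve with rows and columns in `J`. -/
noncomputable def subCurve {n : ℕ} (S : ℝ → Matrix (Fin n) (Fin n) ℝ)
    (J : Finset (Fin n)) (t : ℝ) : Matrix J J ℝ :=
  (S t).submatrix (fun a : J => (a : Fin n)) (fun b : J => (b : Fin n))

open Filter in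
lemma iteratedDeriv_zero_fun (j : ℕ) (t : ℝ) :
    iteratedDeriv j (fun _ : ℝ => (0:ℝ)) t = 0 := by
  induction j with
  | zero => simp
  | succ j ih =>
    rw [iteratedDeriv_succ']
    simp only [deriv_const']
    exact ih

lemma iteratedDeriv_sum_mul {ι : Type*} [Fintype ι] (c : ι → ℝ) (g : ι → ℝ → ℝ)
    (hg : ∀ p, ContDiff ℝ (⊤:ℕ∞) (g p)) (i : ℕ) :
    iteratedDeriv i (fun s => ∑ p, c p * g p s) = fun t => ∑ p, c p * iteratedDeriv i (g p) t := by
  induction i with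
  | zero => simp [iteratedDeriv_zero]
  | succ i ih =>
    have hdiff : ∀ p, ContDiff ℝ (⊤:ℕ∞) (iteratedDeriv i (g p)) := by
      intro p
      rw [iteratedDeriv_eq_iterate]
      exact (hg p).iterate_deriv i
    funext t
    rw [iteratedDeriv_succ, ih]
    rw [deriv_fun_sum (fun p _ => ((hdiff p).differentiable (by simp) t).const_mul (c p))]
    refine Finset.sum_congr rfl fun p _ => ?_
    rw [deriv_const_mul _ ((hdiff p).differentiable (by simp) t), iteratedDeriv_succ]

lemma eventually_zero_of_iteratedDeriv_zero {f : ℝ → ℝ} (hf : AnalyticAt ℝ f 0)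
    (h : ∀ i, iteratedDeriv i f 0 = 0) : ∀ᶠ t in nhds 0, f t = 0 := by
  obtain ⟨p, hp⟩ := hf
  obtain ⟨r, hr⟩ := hp
  have hp1 : ∀ n, (p n) (fun _ => (1:ℝ)) = 0 := by
    intro n
    have := hr.factorial_smul (1:ℝ) n
    rw [← iteratedDeriv_eq_iteratedFDeriv, h n, smul_eq_zero] at this
    rcases this with h1 | h1
    · exact absurd h1 (by exact_mod_cast n.factorial_ne_zero)
    · exact h1
  have hp0 : p = 0 := by
    funext n
    refine ContinuousMultilinearMap.ext fun v => ?_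
    have hv : (fun i : Fin n => v i • (1:ℝ)) = v := by funext i; simp
    calc (p n) v = (p n) (fun i => v i • (1:ℝ)) := by rw [hv]
    _ = (∏ i, v i) • (p n) (fun _ => (1:ℝ)) := (p n).map_smul_univ v _
    _ = 0 := by rw [hp1]; simp
  rw [hp0] at hr
  exact hr.eventually_eq_zero

set_option maxHeartbeats 2000000 in
theorem reduced_curve_monotone_ample {n : ℕ} (hn : 1 ≤ n)
    (S : ℝ → Matrix (Fin n) (Fin n) ℝ)
    (hanalytic : ∀ a b : Fin n, ∀ t : ℝ, AnalyticAt ℝ (fun s => S s a b) t)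
    (hsymm : ∀ t : ℝ, (S t).IsSymm)
    (h0 : S 0 = 0)
    (δ : ℝ) (hδ : 0 < δ)
    (hmono : ∀ t : ℝ, |t| < δ → (matDeriv S 1 t).PosSemidef)
    (hample : ∃ N : ℕ, 1 ≤ N ∧ ∀ z : Fin n → ℝ, z ≠ 0 →
      ∃ i : ℕ, 1 ≤ i ∧ i ≤ N ∧ (matDeriv S i 0).mulVec z ≠ 0)
    (J : Finset (Fin n)) :
    (∃ N' : ℕ, 1 ≤ N' ∧ ∀ y : J → ℝ, y ≠ 0 →
      ∃ i : ℕ, 1 ≤ i ∧ i ≤ N' ∧ (matDeriv (subCurve S J) i 0).mulVec y ≠ 0) ∧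
    (∀ t : ℝ, |t| < δ → (matDeriv (subCurve S J) 1 t).PosSemidef) := by
  classical
  have hpsd : ∀ t : ℝ, |t| < δ → (matDeriv (subCurve S J) 1 t).PosSemidef := by
    intro t ht
    have heq : matDeriv (subCurve S J) 1 t
        = (matDeriv S 1 t).submatrix (fun a : J => (a : Fin n)) (fun b : J => (b : Fin n)) := by
      ext a b
      simp only [matDeriv, subCurve, Matrix.submatrix_apply, Matrix.of_apply]
    rw [heq]
    exact (hmono t ht).submatrix _
  refine ⟨?_, hpsd⟩
  have hcd : ∀ a b : Fin n, ContDiff ℝ (⊤:ℕ∞) (fun s => S s a b) :=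
    fun a b => contDiff_iff_contDiffAt.mpr fun t => (hanalytic a b t).contDiffAt
  -- key pointwise ampleness of the reduced curve
  have key : ∀ y : J → ℝ, y ≠ 0 →
      ∃ i : ℕ, 1 ≤ i ∧ (matDeriv (subCurve S J) i 0).mulVec y ≠ 0 := by
    intro y hy
    by_contra hcon
    push_neg at hcon
    set z : Fin n → ℝ := fun a => if h : a ∈ J then y ⟨a, h⟩ else 0 with hzdef
    have hzJ : ∀ a : J, z (a : Fin n) = y a := by
      intro a; simp only [hzdef]; rw [dif_pos a.2]
    have hzne : z ≠ 0 := by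
      obtain ⟨a, ha⟩ := Function.ne_iff.mp hy
      intro hz0
      apply ha
      have := congrFun hz0 (a : Fin n)
      rwa [hzJ a] at this
    -- reduction of full sums to J sums
    have hzsum : ∀ w : Fin n → ℝ, ∑ a, z a * w a = ∑ a ∈ J.attach, y a * w (a : Fin n) := by
      intro w
      have h1 : ∑ a ∈ J, z a * w a = ∑ a, z a * w a :=
        Finset.sum_subset (Finset.subset_univ J) (by
          intro a _ ha; simp only [hzdef]; rw [dif_neg ha, zero_mul])
      rw [← h1, ← Finset.sum_attach J (fun a => z a * w a)]
      exact Finset.sum_congr rfl fun a _ => by rw [hzJ a]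
    set F : Fin n → ℝ → ℝ := fun a s => ∑ b, z b * S s a b with hFdef
    have hFcd : ∀ a, ContDiff ℝ (⊤:ℕ∞) (F a) := by
      intro a
      exact ContDiff.sum fun b _ => contDiff_const.mul (hcd a b)
    have hFiter : ∀ a i t, iteratedDeriv i (F a) t = ∑ b, z b * matDeriv S i t a b := by
      intro a i t
      have := congrFun (iteratedDeriv_sum_mul z (fun b s => S s a b) (fun b => hcd a b) i) t
      exact this
    set f : ℝ → ℝ := fun s => ∑ a, z a * F a s with hfdef
    have hfiter : ∀ i t, iteratedDeriv i f t = ∑ a, z a * iteratedDeriv i (F a) t := by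
      intro i t
      exact congrFun (iteratedDeriv_sum_mul z F hFcd i) t
    have hfana : AnalyticAt ℝ f 0 := by
      apply Finset.analyticAt_fun_sum
      intro a _
      apply AnalyticAt.mul analyticAt_const
      apply Finset.analyticAt_fun_sum
      intro b _
      exact analyticAt_const.mul (hanalytic a b 0)
    -- entries of the derivative of the subcurve
    have hsubentry : ∀ (i : ℕ) (a b : J),
        matDeriv (subCurve S J) i 0 a b = matDeriv S i 0 (a : Fin n) (b : Fin n) := by
      intro i a b
      simp only [matDeriv, subCurve, Matrix.submatrix_apply, Matrix.of_apply]
    -- all iterated derivatives of f at 0 vanish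
    have hf0 : ∀ i, iteratedDeriv i f 0 = 0 := by
      intro i
      rw [hfiter]
      rcases Nat.eq_zero_or_pos i with hi | hi
      · subst hi
        simp only [iteratedDeriv_zero]
        have : ∀ a, F a 0 = 0 := by
          intro a; simp only [hFdef, h0]; simp
        simp [this]
      · have hc := hcon i hi
        have hinner : ∀ a : J, ∑ b, z b * matDeriv S i 0 (a : Fin n) b = 0 := by
          intro a
          rw [hzsum (fun b => matDeriv S i 0 (a : Fin n) b)]
          have hca := congrFun hc a
          simp only [Matrix.mulVec, dotProduct, Pi.zero_apply] at hca
          rw [Finset.univ_eq_attach] at hca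
          refine Eq.trans ?_ hca
          refine Finset.sum_congr rfl fun b _ => ?_
          rw [hsubentry i a b, mul_comm]
        calc ∑ a, z a * iteratedDeriv i (F a) 0
            = ∑ a ∈ J.attach, y a * iteratedDeriv i (F a) 0 := hzsum _
          _ = 0 := by
              refine Finset.sum_eq_zero fun a _ => ?_
              rw [hFiter, hinner a, mul_zero]
    -- f vanishes on a neighborhood of 0
    have hev := eventually_zero_of_iteratedDeriv_zero hfana hf0
    obtain ⟨U, hUsub, hUopen, hU0⟩ := mem_nhds_iff.mp hev
    set V := U ∩ Metric.ball (0:ℝ) δ with hVdef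
    have hVopen : IsOpen V := hUopen.inter Metric.isOpen_ball
    have hV0 : (0:ℝ) ∈ V := ⟨hU0, by simpa using hδ⟩
    -- the derivative matrix kills z on V
    have hMz : ∀ t ∈ V, (matDeriv S 1 t) *ᵥ z = 0 := by
      intro t ⟨htU, htb⟩
      have htδ : |t| < δ := by simpa [abs_sub_comm] using Metric.mem_ball.mp htb
      have hft : f =ᶠ[nhds t] (fun _ => 0) := by
        filter_upwards [hUopen.mem_nhds htU] with s hs using hUsub hs
      have hderf : deriv f t = 0 := by
        rw [hft.deriv_eq]; simp
      have hq : star z ⬝ᵥ (matDeriv S 1 t) *ᵥ z = 0 := by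
        have h1 : deriv f t = ∑ a, z a * iteratedDeriv 1 (F a) t := by
          rw [← iteratedDeriv_one]; exact hfiter 1 t
        rw [star_trivial]
        have : z ⬝ᵥ (matDeriv S 1 t) *ᵥ z = ∑ a, z a * iteratedDeriv 1 (F a) t := by
          simp only [dotProduct, Matrix.mulVec]
          refine Finset.sum_congr rfl fun a _ => ?_
          rw [hFiter]
          congr 1
          exact Finset.sum_congr rfl fun b _ => mul_comm _ _
        rw [this, ← h1, hderf]
      exact ((hmono t htδ).dotProduct_mulVec_zero_iff z).mp hq
    -- hence the derivative of each F a vanishes near 0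
    have hderF : ∀ a, deriv (F a) =ᶠ[nhds 0] (fun _ => 0) := by
      intro a
      filter_upwards [hVopen.mem_nhds hV0] with t ht
      have := congrFun (hMz t ht) a
      simp only [Matrix.mulVec, dotProduct, Pi.zero_apply] at this
      have h1 : deriv (F a) t = ∑ b, z b * matDeriv S 1 t a b := by
        rw [← iteratedDeriv_one]; exact hFiter a 1 t
      rw [h1, ← this]
      exact Finset.sum_congr rfl fun b _ => mul_comm _ _
    -- hence all iterated derivatives of S at 0 kill z
    have hallder : ∀ i : ℕ, 1 ≤ i → (matDeriv S i 0) *ᵥ z = 0 := by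
      intro i hi
      obtain ⟨j, rfl⟩ := Nat.exists_eq_add_of_le hi
      funext a
      have h1 : ((matDeriv S (1 + j) 0) *ᵥ z) a = iteratedDeriv (1 + j) (F a) 0 := by
        simp only [Matrix.mulVec, dotProduct]
        rw [hFiter]
        exact Finset.sum_congr rfl fun b _ => mul_comm _ _
      rw [h1, add_comm 1 j, iteratedDeriv_succ', (hderF a).iteratedDeriv_eq j, Pi.zero_apply]
      exact iteratedDeriv_zero_fun j 0
    obtain ⟨N, hN1, hNample⟩ := hample
    obtain ⟨i, hi1, _, hine⟩ := hNample z hzne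
    exact hine (hallder i hi1)
  -- uniform bound via stabilization of the chain of kernels
  set A : ℕ → ((J → ℝ) →ₗ[ℝ] (J → ℝ)) :=
    fun i => (matDeriv (subCurve S J) i 0).mulVecLin with hAdef
  set W0 : ℕ → Submodule ℝ (J → ℝ) := fun k => ⨅ i ∈ Finset.Icc 1 k, LinearMap.ker (A i)
    with hW0def
  have hW0mono : ∀ k l, k ≤ l → W0 l ≤ W0 k := by
    intro k l hkl
    refine le_iInf₂ fun i hi => iInf₂_le i (Finset.Icc_subset_Icc_right hkl hi)
  set W : ℕ →o (Submodule ℝ (J → ℝ))ᵒᵈ :=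
    ⟨fun k => OrderDual.toDual (W0 k), fun k l h => hW0mono k l h⟩ with hWdef
  obtain ⟨k₀, hk₀⟩ := IsArtinian.monotone_stabilizes W
  have hk₀' : ∀ m, k₀ ≤ m → W0 k₀ = W0 m := fun m hm => OrderDual.toDual.injective (hk₀ m hm)
  refine ⟨max k₀ 1, le_max_right _ _, ?_⟩
  intro y hy
  by_contra hcon
  push_neg at hcon
  have hyW : y ∈ W0 (max k₀ 1) := by
    refine Submodule.mem_iInf _ |>.mpr fun i => Submodule.mem_iInf _ |>.mpr fun hi => ?_
    rw [Finset.mem_Icc] at hi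
    exact LinearMap.mem_ker.mpr (hcon i hi.1 hi.2)
  obtain ⟨i, hi1, hine⟩ := key y hy
  apply hine
  have hstab : W0 (max k₀ 1) = W0 (max k₀ i) := by
    rw [← hk₀' (max k₀ 1) (le_max_left _ _), hk₀' (max k₀ i) (le_max_left _ _)]
  have hle : W0 (max k₀ i) ≤ LinearMap.ker (A i) :=
    iInf₂_le i (Finset.mem_Icc.mpr ⟨hi1, le_max_right _ _⟩)
  have hker : y ∈ LinearMap.ker (A i) := hle (hstab ▸ hyW)
  have := LinearMap.mem_ker.mp hker
  rwa [hAdef, Matrix.mulVecLin_apply] at this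
end
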